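/- For a positive integer k, setting n = 2k, and 0 < x < 1, we have ₂F₁(1, n - 1/2; (n+1)/2; x) = ((n-1)/(2(1-x)^k)) · Σ_{j=0}^{k-1} C(k-1, j) (-x)^j / (j + k - 1/2). -/

import Mathlib

open Finset

/-- The Gauss hypergeometric function `₂F₁(a,b;c;x)`. -/
noncomputable def gaussHypergeom (a b c x : ℝ) : ℝ :=
  ∑' k : ℕ, (ascPochhammer ℝ k).eval a * (ascPochhammer ℝ k).eval b /
      (ascPochhammer ℝ k).eval c * x ^ k / (Nat.factorial k)

/-- `L s m = ∑_{j=0}^m (-1)^j C(s,j) C(m-j+s, s)`  -/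
noncomputable def Lsum (s m : ℕ) : ℝ :=
  ∑ j ∈ range (m+1), (-1:ℝ)^j * (s.choose j) * (((m-j)+s).choose s)

/-- `Q s M = ∑_{j=0}^M (-1)^j C(s+1,j) C(M-j+s, s)` -/
noncomputable def Qsum (s M : ℕ) : ℝ :=
  ∑ j ∈ range (M+1), (-1:ℝ)^j * ((s+1).choose j) * (((M-j)+s).choose s)

lemma Qsum_eq (s m : ℕ) : Qsum s (m+1) = Lsum s (m+1) - Lsum s m := by
  unfold Qsum Lsum
  rw [sum_range_succ' (fun j => (-1:ℝ)^j * ((s+1).choose j) * (((m+1-j)+s).choose s)) (m+1),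
      sum_range_succ' (fun j => (-1:ℝ)^j * (s.choose j) * (((m+1-j)+s).choose s)) (m+1)]
  have h : ∀ j ∈ range (m+1),
      (-1:ℝ)^(j+1) * ((s+1).choose (j+1)) * (((m+1-(j+1))+s).choose s)
      = ((-1:ℝ)^(j+1) * (s.choose (j+1)) * (((m+1-(j+1))+s).choose s))
        - (-1:ℝ)^j * (s.choose j) * (((m-j)+s).choose s) := by
    intro j hj
    have hjm : j ≤ m := by simpa using Nat.lt_succ_iff.mp (mem_range.mp hj)
    have h1 : m + 1 - (j+1) = m - j := by omega
    rw [h1, Nat.choose_succ_succ]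
    push_cast
    ring
  rw [sum_congr rfl h, sum_sub_distrib]
  simp only [Nat.choose_zero_right, Nat.cast_one, pow_zero]
  ring

lemma Lsum_eq_one (s : ℕ) : ∀ m, Lsum s m = 1 := by
  induction s with
  | zero =>
    intro m
    unfold Lsum
    rw [Finset.sum_eq_single 0]
    · simp
    · intro j hj hj0
      have : 0 < j := Nat.pos_of_ne_zero hj0
      rw [Nat.choose_eq_zero_of_lt this]
      simp
    · simp
  | succ s ih =>
    intro m
    induction m with
    | zero => unfold Lsum; simp
    | succ m ihm =>
      have key : Lsum (s+1) (m+1) = Lsum (s+1) m + Qsum s (m+1) := by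
        unfold Lsum Qsum
        rw [sum_range_succ (fun j => (-1:ℝ)^j * ((s+1).choose j) * (((m+1-j)+(s+1)).choose (s+1))) (m+1),
            sum_range_succ (fun j => (-1:ℝ)^j * ((s+1).choose j) * (((m+1-j)+s).choose s)) (m+1)]
        have h : ∀ j ∈ range (m+1),
            (-1:ℝ)^j * ((s+1).choose j) * (((m+1-j)+(s+1)).choose (s+1))
            = (-1:ℝ)^j * ((s+1).choose j) * (((m-j)+(s+1)).choose (s+1))
              + (-1:ℝ)^j * ((s+1).choose j) * (((m+1-j)+s).choose s) := by
          intro j hj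
          have hjm : j ≤ m := Nat.lt_succ_iff.mp (mem_range.mp hj)
          have h1 : m + 1 - j + (s+1) = ((m-j) + (s+1)) + 1 := by omega
          have h2 : m + 1 - j + s = (m-j) + (s+1) := by omega
          rw [h1, h2, Nat.choose_succ_succ]
          push_cast
          ring
        rw [sum_congr rfl h, sum_add_distrib]
        simp only [Nat.sub_self, Nat.zero_add, Nat.choose_self, Nat.cast_one]
        ring
      rw [key, ihm, Qsum_eq, ih, ih]
      ring

lemma Qsum_eq_zero (s m : ℕ) : Qsum s (m+1) = 0 := by
  rw [Qsum_eq, Lsum_eq_one, Lsum_eq_one]; ring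

/-- Coefficient sequence of the RHS: `B̃(p) = ∑_j v_j C(p-j+K, K)` with
`v_j = (-1)^j C(K,j)/(j+K+1/2)`. -/
noncomputable def Bt (K p : ℕ) : ℝ :=
  ∑ j ∈ range (p+1), (-1:ℝ)^j * (K.choose j) / ((j:ℝ) + K + 1/2) * (((p-j)+K).choose K)

lemma absorb (s n : ℕ) (hn : s ≤ n) :
    ((s:ℝ)+1) * ((n+1).choose (s+1)) = ((n:ℝ) + 1 - s) * ((n+1).choose s) := by
  have h1 := Nat.add_one_mul_choose_eq n s
  have h2 := Nat.choose_mul_succ_eq n s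
  have h1' : ((n:ℝ)+1) * (n.choose s) = ((n+1).choose (s+1)) * ((s:ℝ)+1) := by
    exact_mod_cast congrArg (Nat.cast : ℕ → ℝ) h1
  have h2' : ((n.choose s):ℝ) * ((n:ℝ)+1) = ((n+1).choose s) * ((n+1-s : ℕ):ℝ) := by
    exact_mod_cast congrArg (Nat.cast : ℕ → ℝ) h2
  have h3 : ((n+1-s : ℕ):ℝ) = (n:ℝ) + 1 - s := by
    have : s ≤ n + 1 := by omega
    push_cast [Nat.cast_sub this]
    ring
  rw [h3] at h2'
  nlinarith [h1', h2']

lemma Bt_rec (s p : ℕ) :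
    ((s:ℝ) + 5/2 + p) * Bt (s+1) (p+1) = (2*(s:ℝ) + 7/2 + p) * Bt (s+1) p := by
  have hsplit : Bt (s+1) (p+1) = Bt (s+1) p
      + (∑ j ∈ range (p+1), (-1:ℝ)^j * ((s+1).choose j) / ((j:ℝ) + ((s:ℝ)+1) + 1/2)
          * (((p-j)+(s+1)).choose s))
      + (-1:ℝ)^(p+1) * (((s+1)).choose (p+1)) / (((p:ℝ)+1) + ((s:ℝ)+1) + 1/2) := by
    unfold Bt
    push_cast
    rw [Finset.sum_range_succ]
    have h : ∀ j ∈ range (p+1),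
        (-1:ℝ)^j * ((s+1).choose j) / ((j:ℝ) + ((s:ℝ)+1) + 1/2) * (((p+1-j)+(s+1)).choose (s+1))
        = (-1:ℝ)^j * ((s+1).choose j) / ((j:ℝ) + ((s:ℝ)+1) + 1/2) * (((p-j)+(s+1)).choose (s+1))
          + (-1:ℝ)^j * ((s+1).choose j) / ((j:ℝ) + ((s:ℝ)+1) + 1/2) * (((p-j)+(s+1)).choose s) := by
      intro j hj
      have hjm : j ≤ p := Nat.lt_succ_iff.mp (mem_range.mp hj)
      have h1 : p + 1 - j + (s+1) = ((p-j) + (s+1)) + 1 := by omega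
      rw [h1, Nat.choose_succ_succ]
      push_cast
      ring
    rw [sum_congr rfl h, sum_add_distrib]
    simp only [Nat.sub_self, Nat.zero_add, Nat.choose_self, Nat.cast_one]
    push_cast
    ring
  have hQ := Qsum_eq_zero s p
  unfold Qsum at hQ
  rw [Finset.sum_range_succ] at hQ
  have hkey : ∀ j ∈ range (p+1),
      ((s:ℝ) + 5/2 + p) * ((-1:ℝ)^j * ((s+1).choose j) / ((j:ℝ) + ((s:ℝ)+1) + 1/2)
          * (((p-j)+(s+1)).choose s))
      - ((s:ℝ)+1) * ((-1:ℝ)^j * ((s+1).choose j) / ((j:ℝ) + ((s:ℝ)+1) + 1/2)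
          * (((p-j)+(s+1)).choose (s+1)))
      = (-1:ℝ)^j * ((s+1).choose j) * (((p+1-j)+s).choose s) := by
    intro j hj
    have hjm : j ≤ p := Nat.lt_succ_iff.mp (mem_range.mp hj)
    have hd : ((j:ℝ) + ((s:ℝ)+1) + 1/2) ≠ 0 := by positivity
    have habs := absorb s ((p-j)+s) (by omega)
    have h1 : (p-j) + s + 1 = (p-j) + (s+1) := by omega
    rw [h1] at habs
    have hcast : ((p-j+s : ℕ):ℝ) = (p:ℝ) - j + s := by
      push_cast [Nat.cast_sub hjm]; ring
    rw [hcast] at habs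
    have h2 : p + 1 - j + s = (p-j) + (s+1) := by omega
    rw [h2]
    have h5 : ((s:ℝ) + 5/2 + p) * ((((p-j)+(s+1)).choose s : ℕ) : ℝ)
          - ((s:ℝ)+1) * ((((p-j)+(s+1)).choose (s+1) : ℕ) : ℝ)
        = ((j:ℝ) + ((s:ℝ)+1) + 1/2) * ((((p-j)+(s+1)).choose s : ℕ) : ℝ) := by
      linear_combination -habs
    have expand : ((s:ℝ) + 5/2 + p) * ((-1:ℝ)^j * ((s+1).choose j) / ((j:ℝ) + ((s:ℝ)+1) + 1/2)
          * (((p-j)+(s+1)).choose s))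
        - ((s:ℝ)+1) * ((-1:ℝ)^j * ((s+1).choose j) / ((j:ℝ) + ((s:ℝ)+1) + 1/2)
          * (((p-j)+(s+1)).choose (s+1)))
        = (-1:ℝ)^j * ((s+1).choose j) / ((j:ℝ) + ((s:ℝ)+1) + 1/2)
          * (((s:ℝ) + 5/2 + p) * ((((p-j)+(s+1)).choose s : ℕ) : ℝ)
            - ((s:ℝ)+1) * ((((p-j)+(s+1)).choose (s+1) : ℕ) : ℝ)) := by ring
    rw [expand, h5]
    field_simp
  have main : ((s:ℝ) + 5/2 + p) * (∑ j ∈ range (p+1), (-1:ℝ)^j * ((s+1).choose j)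
        / ((j:ℝ) + ((s:ℝ)+1) + 1/2) * (((p-j)+(s+1)).choose s))
      - ((s:ℝ)+1) * Bt (s+1) p
      = ∑ j ∈ range (p+1), (-1:ℝ)^j * ((s+1).choose j) * (((p+1-j)+s).choose s) := by
    unfold Bt
    push_cast
    rw [mul_sum, mul_sum, ← sum_sub_distrib]
    exact sum_congr rfl hkey
  have last : ((s:ℝ) + 5/2 + p) * ((-1:ℝ)^(p+1) * (((s+1)).choose (p+1))
        / (((p:ℝ)+1) + ((s:ℝ)+1) + 1/2))
      = (-1:ℝ)^(p+1) * (((s+1)).choose (p+1)) * (((p+1-(p+1))+s).choose s) := by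
    have hd : (((p:ℝ)+1) + ((s:ℝ)+1) + 1/2) ≠ 0 := by positivity
    simp only [Nat.sub_self, Nat.zero_add, Nat.choose_self, Nat.cast_one]
    field_simp
    ring
  rw [hsplit]
  push_cast at hQ
  simp only [Nat.sub_self, Nat.zero_add, Nat.choose_self, Nat.cast_one] at last hQ
  linear_combination main + last + hQ

lemma coeff_id (K p : ℕ) :
    (ascPochhammer ℝ p).eval (2*(K:ℝ) + 3/2) / (ascPochhammer ℝ p).eval ((K:ℝ) + 3/2)
      = ((K:ℝ) + 1/2) * Bt K p := by
  cases K with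
  | zero =>
    have h1 : (2*((0:ℕ):ℝ) + 3/2) = ((0:ℕ):ℝ) + 3/2 := by norm_num
    rw [h1, div_self (ne_of_gt (ascPochhammer_pos p (((0:ℕ):ℝ) + 3/2) (by norm_num)))]
    have h2 : Bt 0 p = 2 := by
      unfold Bt
      rw [Finset.sum_eq_single 0]
      · norm_num
      · intro j hj hj0
        rw [Nat.choose_eq_zero_of_lt (Nat.pos_of_ne_zero hj0)]
        simp
      · simp
    rw [h2]; norm_num
  | succ s =>
    induction p with
    | zero =>
      have h2 : Bt (s+1) 0 = 1 / ((s:ℝ) + 3/2) := by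
        unfold Bt
        rw [Finset.sum_range_one]
        push_cast
        simp only [Nat.choose_self, Nat.choose_zero_right, Nat.zero_sub, Nat.zero_add,
          Nat.cast_one, pow_zero]
        rw [one_div, show (0:ℝ) + ((s:ℝ) + 1) + 2⁻¹ = (s:ℝ) + 3/2 by ring, one_mul, mul_one]
      simp only [ascPochhammer_zero, Polynomial.eval_one, h2]
      push_cast
      have : ((s:ℝ) + 3/2) ≠ 0 := by positivity
      field_simp
      ring
    | succ p ih =>
      have hb : 0 < (ascPochhammer ℝ p).eval (2*((s:ℝ)+1) + 3/2) :=
        ascPochhammer_pos p _ (by positivity)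
      have hc : 0 < (ascPochhammer ℝ p).eval (((s:ℝ)+1) + 3/2) :=
        ascPochhammer_pos p _ (by positivity)
      have hPb : (ascPochhammer ℝ (p+1)).eval (2*(((s+1):ℕ):ℝ) + 3/2)
          = (ascPochhammer ℝ p).eval (2*(((s+1):ℕ):ℝ) + 3/2) * (2*(((s+1):ℕ):ℝ) + 3/2 + p) := by
        rw [ascPochhammer_succ_right]
        simp [Polynomial.eval_mul]
      have hPc : (ascPochhammer ℝ (p+1)).eval ((((s+1):ℕ):ℝ) + 3/2)
          = (ascPochhammer ℝ p).eval ((((s+1):ℕ):ℝ) + 3/2) * ((((s+1):ℕ):ℝ) + 3/2 + p) := by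
        rw [ascPochhammer_succ_right]
        simp [Polynomial.eval_mul]
      rw [hPb, hPc]
      have hrec := Bt_rec s p
      push_cast at ih ⊢
      rw [div_eq_iff (by positivity)]
      rw [div_eq_iff (by positivity : (ascPochhammer ℝ p).eval (((s:ℝ)+1) + 3/2) ≠ 0)] at ih
      linear_combination (2*((s:ℝ)+1) + 3/2 + p) * ih
        - (((s:ℝ)+1) + 1/2) * ((ascPochhammer ℝ p).eval (((s:ℝ)+1) + 3/2)) * hrec

lemma hockey (K : ℕ) : ∀ n, ∑ a ∈ range (n+1), (a+K).choose K = (n+K+1).choose (K+1) := by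
  intro n
  induction n with
  | zero => simp
  | succ n ih =>
    rw [Finset.sum_range_succ, ih, show n+1+K = n+K+1 from by omega,
        Nat.choose_succ_succ (n+K+1) K, Nat.succ_eq_add_one]
    omega

lemma binom_series (x : ℝ) (h0 : 0 ≤ x) (h1 : x < 1) (K : ℕ) :
    (Summable fun i => ‖(((i+K).choose K : ℕ):ℝ) * x^i‖) ∧
      ∑' i : ℕ, (((i+K).choose K : ℕ):ℝ) * x^i = ((1-x)^(K+1))⁻¹ := by
  induction K with
  | zero =>
    constructor
    · simp only [Nat.add_zero, Nat.choose_zero_right, Nat.cast_one, one_mul]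
      exact (summable_geometric_of_lt_one h0 h1).norm
    · simp only [Nat.add_zero, Nat.choose_zero_right, Nat.cast_one, one_mul]
      rw [zero_add, pow_one]
      exact tsum_geometric_of_lt_one h0 h1
  | succ K ih =>
    obtain ⟨hf, hval⟩ := ih
    have hg : Summable fun i : ℕ => ‖x^i‖ := (summable_geometric_of_lt_one h0 h1).norm
    have hag : ∀ n : ℕ, (∑ kl ∈ Finset.HasAntidiagonal.antidiagonal n,
          ((((kl.1+K).choose K : ℕ):ℝ) * x^kl.1) * x^kl.2)
        = (((n+(K+1)).choose (K+1) : ℕ):ℝ) * x^n := by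
      intro n
      rw [Finset.Nat.sum_antidiagonal_eq_sum_range_succ_mk]
      have : ∀ a ∈ range (n+1),
          ((((a+K).choose K : ℕ):ℝ) * x^a) * x^(n-a) = (((a+K).choose K : ℕ):ℝ) * x^n := by
        intro a ha
        have haa : a ≤ n := Nat.lt_succ_iff.mp (mem_range.mp ha)
        rw [mul_assoc, ← pow_add]
        congr 2
        omega
      rw [sum_congr rfl this, ← Finset.sum_mul, ← Nat.cast_sum, hockey K n,
        show n+(K+1) = n+K+1 from by omega]
    constructor
    · have hs := summable_norm_sum_mul_antidiagonal_of_summable_norm hf hg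
      refine (summable_congr (fun n => ?_)).mp hs
      rw [hag n]
    · have hcauchy := tsum_mul_tsum_eq_tsum_sum_antidiagonal_of_summable_norm hf hg
      have hgeo : ∑' i : ℕ, x^i = (1-x)⁻¹ := tsum_geometric_of_lt_one h0 h1
      calc ∑' n : ℕ, (((n+(K+1)).choose (K+1) : ℕ):ℝ) * x^n
          = ∑' n : ℕ, ∑ kl ∈ Finset.HasAntidiagonal.antidiagonal n,
              ((((kl.1+K).choose K : ℕ):ℝ) * x^kl.1) * x^kl.2 := by
            exact tsum_congr (fun n => (hag n).symm)
        _ = (∑' i : ℕ, (((i+K).choose K : ℕ):ℝ) * x^i) * ∑' i : ℕ, x^i := hcauchy.symm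
        _ = ((1-x)^(K+1))⁻¹ * (1-x)⁻¹ := by rw [hval, hgeo]
        _ = ((1-x)^(K+2))⁻¹ := by rw [← mul_inv, ← pow_succ]

/-- For a positive integer `k`, with `n = 2k`, and `0 < x < 1`,
`₂F₁(1, n-1/2; (n+1)/2; x) = ((n-1)/(2(1-x)^k)) ∑_{j=0}^{k-1} C(k-1,j)(-x)^j/(j+k-1/2)`. -/
theorem gaussHypergeom_even (k n : ℕ) (hk : 0 < k) (hn : n = 2 * k) (x : ℝ)
    (hx0 : 0 < x) (hx1 : x < 1) :
    gaussHypergeom 1 ((n : ℝ) - 1/2) (((n : ℝ) + 1) / 2) x =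
      ((n : ℝ) - 1) / (2 * (1 - x) ^ k) *
        ∑ j ∈ range k, (k - 1).choose j * (-x) ^ j / ((j : ℝ) + k - 1/2) := by
  subst hn
  obtain ⟨K, rfl⟩ : ∃ K, k = K + 1 := ⟨k - 1, by omega⟩
  have hx0' : (0:ℝ) ≤ x := le_of_lt hx0
  have h1x : (0:ℝ) < 1 - x := by linarith
  obtain ⟨hgs, hgv⟩ := binom_series x hx0' hx1 K
  set f : ℕ → ℝ := fun j => ((K.choose j : ℕ):ℝ) * (-x)^j / ((j:ℝ) + (K:ℝ) + 1/2) with hf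
  set g : ℕ → ℝ := fun i => (((i+K).choose K : ℕ):ℝ) * x^i with hgdef
  have hfz : ∀ j ∉ range (K+1), f j = 0 := by
    intro j hj
    have hKj : K < j := by
      simp only [mem_range, not_lt] at hj; omega
    simp [hf, Nat.choose_eq_zero_of_lt hKj]
  have hfs : Summable fun j => ‖f j‖ := by
    apply summable_of_ne_finset_zero (s := range (K+1))
    intro j hj; rw [hfz j hj, norm_zero]
  have hco : ∀ m : ℕ, (∑ kl ∈ Finset.HasAntidiagonal.antidiagonal m, f kl.1 * g kl.2) = Bt K m * x^m := by
    intro m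
    rw [Finset.Nat.sum_antidiagonal_eq_sum_range_succ_mk]
    unfold Bt
    rw [Finset.sum_mul]
    refine sum_congr rfl (fun a ha => ?_)
    have haa : a ≤ m := Nat.lt_succ_iff.mp (mem_range.mp ha)
    simp only [hf, hgdef]
    have hd : ((a:ℝ)+(K:ℝ)+1/2) ≠ 0 := by positivity
    rw [show x^m = x^a * x^(m-a) from by rw [← pow_add]; congr 1; omega, neg_pow]
    field_simp
  have hBt : (∑' j, f j) * (∑' i, g i) = ∑' m, Bt K m * x^m :=
    (tsum_mul_tsum_eq_tsum_sum_antidiagonal_of_summable_norm hfs hgs).trans (tsum_congr hco)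
  have hterm : ∀ m : ℕ,
      (ascPochhammer ℝ m).eval 1 * (ascPochhammer ℝ m).eval (((2*(K+1):ℕ):ℝ) - 1/2) /
          (ascPochhammer ℝ m).eval ((((2*(K+1):ℕ):ℝ) + 1)/2) * x^m / (Nat.factorial m)
        = ((K:ℝ)+1/2) * (Bt K m * x^m) := by
    intro m
    have e1 : ((2*(K+1):ℕ):ℝ) - 1/2 = 2*(K:ℝ) + 3/2 := by push_cast; ring
    have e2 : (((2*(K+1):ℕ):ℝ) + 1)/2 = (K:ℝ) + 3/2 := by push_cast; ring
    rw [e1, e2, ascPochhammer_eval_one]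
    have hc : (0:ℝ) < (ascPochhammer ℝ m).eval ((K:ℝ) + 3/2) :=
      ascPochhammer_pos _ _ (by positivity)
    have hfac : ((m.factorial : ℕ):ℝ) ≠ 0 := Nat.cast_ne_zero.mpr m.factorial_ne_zero
    have hci := coeff_id K m
    calc (m.factorial : ℝ) * (ascPochhammer ℝ m).eval (2*(K:ℝ) + 3/2) /
            (ascPochhammer ℝ m).eval ((K:ℝ) + 3/2) * x^m / (m.factorial : ℝ)
        = (ascPochhammer ℝ m).eval (2*(K:ℝ) + 3/2) /
            (ascPochhammer ℝ m).eval ((K:ℝ) + 3/2) * x^m := by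
          rw [show (m.factorial : ℝ) * (ascPochhammer ℝ m).eval (2*(K:ℝ) + 3/2) /
              (ascPochhammer ℝ m).eval ((K:ℝ) + 3/2) * x^m / (m.factorial : ℝ)
            = ((ascPochhammer ℝ m).eval (2*(K:ℝ) + 3/2) /
              (ascPochhammer ℝ m).eval ((K:ℝ) + 3/2) * x^m) * ((m.factorial : ℝ)/(m.factorial : ℝ))
            by ring, div_self hfac, mul_one]
      _ = ((K:ℝ)+1/2) * (Bt K m * x^m) := by rw [hci]; ring
  have hsum : ∑ j ∈ range (K+1), (((K+1-1).choose j:ℕ):ℝ) * (-x)^j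
        / ((j:ℝ) + ((K+1:ℕ):ℝ) - 1/2) = ∑' j, f j := by
    rw [tsum_eq_sum (s := range (K+1)) hfz]
    refine sum_congr rfl fun j hj => ?_
    simp only [hf, Nat.add_sub_cancel]
    congr 1
    push_cast
    ring
  calc gaussHypergeom 1 (((2*(K+1):ℕ):ℝ) - 1/2) ((((2*(K+1):ℕ):ℝ) + 1)/2) x
      = ∑' m : ℕ, ((K:ℝ)+1/2) * (Bt K m * x^m) := tsum_congr hterm
    _ = ((K:ℝ)+1/2) * ∑' m : ℕ, (Bt K m * x^m) := tsum_mul_left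
    _ = ((K:ℝ)+1/2) * ((∑' j, f j) * (∑' i, g i)) := by rw [hBt]
    _ = (((2*(K+1):ℕ):ℝ) - 1) / (2 * (1 - x) ^ (K+1)) *
        ∑ j ∈ range (K+1), (((K+1-1).choose j:ℕ):ℝ) * (-x)^j
          / ((j:ℝ) + ((K+1:ℕ):ℝ) - 1/2) := by
      rw [hsum, hgv]
      have hpow : (1-x)^(K+1) ≠ 0 := pow_ne_zero _ (ne_of_gt h1x)
      have hpinv : ((1-x)^(K+1))⁻¹ * (1-x)^(K+1) = 1 := inv_mul_cancel₀ hpow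
      have h2 : ((2*(K+1):ℕ):ℝ) - 1 = 2*((K:ℝ)+1/2) := by push_cast; ring
      rw [h2, div_mul_eq_mul_div, eq_div_iff (by positivity : (2*(1-x)^(K+1)) ≠ 0)]
      linear_combination (2*((K:ℝ)+1/2) * (∑' j, f j)) * hpinv
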